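/- Let (B, p, x) be a non-normalized labeled seed of rank n in F over P, fix k ∈ {1,…,n} with b_{kk} = 0, and let (B', p', x') be a seed obtained from it by mutation in direction k, i.e.: B' = μ_k(B); p'_k^± = p_k^∓; for j ≠ k, p'_j^+ / p'_j^- = (p_j^+ / p_j^-) · (p_k^+)^{b_{kj}} if b_{kj} ≥ 0 and = (p_j^+ / p_j^-) · (p_k^-)^{b_{kj}} if b_{kj} ≤ 0; x'_j = x_j for j ≠ k; and x_k · x'_k = p_k^+ · ∏_{j=1}^n x_j^{[b_{jk}]_+} + p_k^- · ∏_{j=1}^n x_j^{[-b_{jk}]_+}. Assume x'_k ≠ 0. Then the hatted variables satisfy ŷ'_k = (ŷ_k)^{-1}, and ŷ'_j = ŷ_j · ŷ_k^{[b_{kj}]_+} · (ŷ_k + 1)^{-b_{kj}} for every j ≠ k. (Proposition 1.5: the hatted variables of adjacent seeds determine each other by the Y-pattern recurrence in the ambient field.) -/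

import Mathlib

open scoped BigOperators

private lemma sign_mul_max_aux (a c : ℤ) :
    a.sign * max (a * c) 0 = max a 0 * max c 0 - max (-a) 0 * max (-c) 0 := by
  rcases lt_trichotomy a 0 with ha | rfl | ha <;>
    rcases lt_trichotomy c 0 with hc | rfl | hc
  · rw [Int.sign_eq_neg_one_of_neg ha,
      max_eq_left (mul_nonneg_of_nonpos_of_nonpos ha.le hc.le),
      max_eq_right ha.le, max_eq_right hc.le,
      max_eq_left (neg_nonneg.2 ha.le), max_eq_left (neg_nonneg.2 hc.le)]
    ring
  · simp
  · rw [Int.sign_eq_neg_one_of_neg ha,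
      max_eq_right (mul_nonpos_of_nonpos_of_nonneg ha.le hc.le),
      max_eq_right ha.le, max_eq_left hc.le,
      max_eq_left (neg_nonneg.2 ha.le), max_eq_right (neg_nonpos.2 hc.le)]
    ring
  · simp
  · simp
  · simp
  · rw [Int.sign_eq_one_of_pos ha,
      max_eq_right (mul_nonpos_of_nonneg_of_nonpos ha.le hc.le),
      max_eq_left ha.le, max_eq_right hc.le,
      max_eq_right (neg_nonpos.2 ha.le), max_eq_left (neg_nonneg.2 hc.le)]
    ring
  · simp
  · rw [Int.sign_eq_one_of_pos ha,
      max_eq_left (mul_nonneg ha.le hc.le),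
      max_eq_left ha.le, max_eq_left hc.le,
      max_eq_right (neg_nonpos.2 ha.le), max_eq_right (neg_nonpos.2 hc.le)]
    ring


/-- Proposition 1.5.
If `(B', p', x')` is obtained from the non-normalized labeled seed `(B, p, x)` by mutation
in direction `k` (with `b_{kk} = 0` and the mutated cluster variable nonzero), then the
hatted variables of the two seeds are related by the `Y`-pattern recurrence (1.8). -/
theorem hatted_variables_mutate
    (n : ℕ) (hn : 1 ≤ n) (F : Type*) [Field F] (P : Subgroup Fˣ)
    (B B' : Matrix (Fin n) (Fin n) ℤ)
    (pP pM pP' pM' : Fin n → Fˣ) (x x' : Fin n → F)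
    (hmemPP : ∀ j, pP j ∈ P) (hmemPM : ∀ j, pM j ∈ P)
    (hmemPP' : ∀ j, pP' j ∈ P) (hmemPM' : ∀ j, pM' j ∈ P)
    (hx : ∀ j, x j ≠ 0)
    (k : Fin n) (hBkk : B k k = 0)
    -- matrix mutation
    (hB' : ∀ i j, B' i j = if i = k ∨ j = k then -B i j
      else B i j + Int.sign (B i k) * max (B i k * B k j) 0)
    -- coefficient mutation
    (hp'kP : pP' k = pM k) (hp'kM : pM' k = pP k)
    (hp'ratio : ∀ j, j ≠ k →
      (0 ≤ B k j → pP' j / pM' j = pP j / pM j * pP k ^ (B k j)) ∧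
      (B k j ≤ 0 → pP' j / pM' j = pP j / pM j * pM k ^ (B k j)))
    -- cluster mutation (exchange relation)
    (hx'j : ∀ j, j ≠ k → x' j = x j)
    (hx'k : x k * x' k =
      (pP k : F) * ∏ j, x j ^ (max (B j k) 0) + (pM k : F) * ∏ j, x j ^ (max (-B j k) 0))
    (hx'k0 : x' k ≠ 0) :
    letI yhat : Fin n → F := fun j => ((pP j : F) / (pM j : F)) * ∏ i, x i ^ (B i j)
    letI yhat' : Fin n → F := fun j => ((pP' j : F) / (pM' j : F)) * ∏ i, x' i ^ (B' i j)
    yhat' k = (yhat k)⁻¹ ∧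
      ∀ j, j ≠ k → yhat' j = yhat j * yhat k ^ (max (B k j) 0) * (yhat k + 1) ^ (-B k j) := by
  have hpP0 : ∀ i, (pP i : F) ≠ 0 := fun i => Units.ne_zero _
  have hpM0 : ∀ i, (pM i : F) ≠ 0 := fun i => Units.ne_zero _
  set QP : F := ∏ i, x i ^ (max (B i k) 0) with hQP
  set QM : F := ∏ i, x i ^ (max (-B i k) 0) with hQM
  have hQP0 : QP ≠ 0 := Finset.prod_ne_zero_iff.2 fun i _ => zpow_ne_zero _ (hx i)
  have hQM0 : QM ≠ 0 := Finset.prod_ne_zero_iff.2 fun i _ => zpow_ne_zero _ (hx i)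
  have hXk : ∏ i, x i ^ (B i k) = QP / QM := by
    rw [eq_div_iff hQM0, hQP, hQM, ← Finset.prod_mul_distrib]
    refine Finset.prod_congr rfl fun i _ => ?_
    rw [← zpow_add₀ (hx i)]
    congr 1
    omega
  beta_reduce
  constructor
  · have h1 : ∏ i, x' i ^ (B' i k) = ∏ i, (x i ^ (B i k))⁻¹ := by
      refine Finset.prod_congr rfl fun i _ => ?_
      rw [hB' i k, if_pos (Or.inr rfl), zpow_neg]
      by_cases hik : i = k
      · subst hik; rw [hBkk]; simp
      · rw [hx'j i hik]
    rw [hp'kP, hp'kM, h1, Finset.prod_inv_distrib, mul_inv, inv_div]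
  · intro j hj
    set c : ℤ := B k j with hcdef
    set mc : ℤ := max c 0 with hmc
    set mn : ℤ := max (-c) 0 with hmn
    set Y : F := ((pP k : F) / (pM k : F)) * ∏ i, x i ^ (B i k) with hY
    have hyk1 : Y + 1 = x k * x' k / ((pM k : F) * QM) := by
      rw [eq_div_iff (mul_ne_zero (hpM0 k) hQM0), hx'k, hY, hXk]
      field_simp
    have hE4 : (Y + 1) ^ (-c) = (x k * x' k) ^ (-c) * (pM k : F) ^ c * QM ^ c := by
      rw [hyk1, div_zpow, zpow_neg ((pM k : F) * QM) c, div_inv_eq_mul, mul_zpow,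
        mul_zpow (pM k : F) QM c, ← mul_assoc]
    have hE3 : Y ^ mc = (pP k : F) ^ mc * ((pM k : F) ^ mc)⁻¹ * QP ^ mc * (QM ^ mc)⁻¹ := by
      rw [hY, hXk, mul_zpow, div_zpow, div_zpow]
      ring
    have hE1 : (pP' j : F) / (pM' j : F) =
        (pP j : F) / (pM j : F) * (pP k : F) ^ mc * (pM k : F) ^ (-mn) := by
      rcases le_total 0 c with h | h
      · have h2 := congrArg (Units.val) ((hp'ratio j hj).1 h)
        push_cast at h2
        rw [h2]
        have h3 : mc = c := by omega
        have h4 : -mn = 0 := by omega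
        rw [h3, h4, zpow_zero, mul_one]
      · have h2 := congrArg (Units.val) ((hp'ratio j hj).2 h)
        push_cast at h2
        rw [h2]
        have h3 : mc = 0 := by omega
        have h4 : -mn = c := by omega
        rw [h3, h4, zpow_zero, mul_one]
    have hB'kj : B' k j = -c := by rw [hB' k j, if_pos (Or.inl rfl)]
    have hB'ij : ∀ i, i ≠ k →
        B' i j = B i j + (max (B i k) 0 * mc - max (-B i k) 0 * mn) := by
      intro i hi
      rw [hB' i j, if_neg (by simp [hi, hj]), sign_mul_max_aux]
    have hE2 : ∏ i, x' i ^ (B' i j) =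
        (x k * x' k) ^ (-c) * (∏ i, x i ^ (B i j)) * QP ^ mc * (QM ^ mn)⁻¹ := by
      rw [← Finset.mul_prod_erase Finset.univ _ (Finset.mem_univ k), hB'kj]
      have hrest : ∏ i ∈ Finset.univ.erase k, x' i ^ (B' i j) =
          ∏ i ∈ Finset.univ.erase k,
            (x i ^ (B i j) * (x i ^ (max (B i k) 0)) ^ mc *
              ((x i ^ (max (-B i k) 0)) ^ mn)⁻¹) := by
        refine Finset.prod_congr rfl fun i hi => ?_
        have hik : i ≠ k := Finset.ne_of_mem_erase hi
        rw [hx'j i hik, hB'ij i hik, ← zpow_mul, ← zpow_mul, ← zpow_neg,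
          ← zpow_add₀ (hx i), ← zpow_add₀ (hx i)]
        congr 1
        ring
      rw [hrest, Finset.prod_mul_distrib, Finset.prod_mul_distrib, Finset.prod_inv_distrib,
        Finset.prod_zpow, Finset.prod_zpow]
      have e1 : ∏ i ∈ Finset.univ.erase k, x i ^ (max (B i k) 0) = QP :=
        Finset.prod_erase _ (by rw [hBkk]; norm_num)
      have e2 : ∏ i ∈ Finset.univ.erase k, x i ^ (max (-B i k) 0) = QM :=
        Finset.prod_erase _ (by rw [hBkk]; norm_num)
      have e3 : ∏ i ∈ Finset.univ.erase k, x i ^ (B i j) =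
          (∏ i, x i ^ (B i j)) * (x k ^ c)⁻¹ := by
        rw [← Finset.mul_prod_erase Finset.univ (fun i => x i ^ (B i j)) (Finset.mem_univ k)]
        field_simp [zpow_ne_zero _ (hx k)]
        rfl
      rw [e1, e2, e3, mul_zpow, zpow_neg (x k) c]
      ring
    rw [hE1, hE2, hE3, hE4]
    have hpm : (pM k : F) ^ (-mn) = ((pM k : F) ^ mc)⁻¹ * (pM k : F) ^ c := by
      rw [← zpow_neg, ← zpow_add₀ (hpM0 k)]
      congr 1
      omega
    have hqm : (QM ^ mn)⁻¹ = (QM ^ mc)⁻¹ * QM ^ c := by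
      rw [← zpow_neg, ← zpow_neg, ← zpow_add₀ hQM0]
      congr 1
      omega
    rw [hpm, hqm]
    ring
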